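/- Let u_n be the iterates of the relaxed greedy algorithm. Then for every n ≥ 1, u_n ∈ Σ_{n,M}(D) and for every z in the set M·B_1(D) (i.e. every z with ‖z‖_{K1(D)} ≤ M) one has L(u_n) − L(z) ≤ 32(CM)²K/n. In particular, L(u_n) − inf{L(z) : ‖z‖_{K1(D)} ≤ M} ≤ 32(CM)²K/n. -/

import Mathlib

open Set Pointwise
open scoped InnerProductSpace

noncomputable section

/-- `B₁(𝔻)`: the closure of the convex hull of `𝔻 ∪ (-𝔻)` in `H`. -/
def symmConvexHull {H : Type*} [NormedAddCommGroup H] [NormedSpace ℝ H]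
    (D : Set H) : Set H :=
  closure (convexHull ℝ (D ∪ (-D)))

/-- `Σ_{n,M}(𝔻)`: `n`-term linear combinations of dictionary elements whose coefficients
have ℓ¹-norm at most `M`. -/
def SigmaNM {H : Type*} [NormedAddCommGroup H] [NormedSpace ℝ H]
    (D : Set H) (n : ℕ) (M : ℝ) : Set H :=
  {f | ∃ (a : Fin n → ℝ) (g : Fin n → H),
    (∀ i, g i ∈ D) ∧ (∑ i, |a i|) ≤ M ∧ f = ∑ i, a i • g i}

/-- **Convergence of the relaxed greedy algorithm.**
Let `H` be a real Hilbert space, `𝔻 ⊆ H` a symmetric dictionary with `sup_{g∈𝔻} ‖g‖ ≤ C`,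
`L : H → ℝ` convex, Fréchet differentiable with gradient `∇L`, and `K`-smooth, and fix `M > 0`.
Let `u_n` be the iterates of the relaxed greedy algorithm: `u₀ = 0`,
`g_n = argmax_{g ∈ 𝔻} ⟨g, ∇L(u_{n−1})⟩`, `α_n = min(1, 2/n)`,
`u_n = (1 − α_n) u_{n−1} − M α_n g_n`. Then for every `n ≥ 1`, `u_n ∈ Σ_{n,M}(𝔻)` and
for every `z ∈ M·B₁(𝔻)` one has `L(u_n) − L(z) ≤ 32 (CM)² K / n`; in particular the same
bound holds with `inf {L(z) : ‖z‖_{K₁(𝔻)} ≤ M}` in place of `L(z)`. -/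
theorem rga_convergence
    {H : Type*} [NormedAddCommGroup H] [InnerProductSpace ℝ H] [CompleteSpace H]
    (D : Set H) (C K M : ℝ) (hK : 0 ≤ K) (hM : 0 < M)
    (hsymm : ∀ g ∈ D, -g ∈ D)
    (hbound : ∀ g ∈ D, ‖g‖ ≤ C)
    (L : H → ℝ) (gradL : H → H)
    (hconv : ConvexOn ℝ Set.univ L)
    (hdiff : ∀ v : H, HasGradientAt L (gradL v) v)
    (hsmooth : ∀ u v : H, L u ≤ L v + ⟪gradL v, u - v⟫_ℝ + K / 2 * ‖u - v‖ ^ 2)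
    (u g : ℕ → H) (α : ℕ → ℝ)
    (hu0 : u 0 = 0)
    (hα : ∀ n : ℕ, α n = min 1 (2 / (n : ℝ)))
    (hgD : ∀ n : ℕ, 1 ≤ n → g n ∈ D)
    (hgmax : ∀ n : ℕ, 1 ≤ n → ∀ d ∈ D,
      ⟪d, gradL (u (n - 1))⟫_ℝ ≤ ⟪g n, gradL (u (n - 1))⟫_ℝ)
    (hiter : ∀ n : ℕ, 1 ≤ n → u n = (1 - α n) • u (n - 1) - (M * α n) • g n) :
    ∀ n : ℕ, 1 ≤ n →
      u n ∈ SigmaNM D n M ∧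
      ∀ z ∈ M • symmConvexHull D,
        L (u n) - L z ≤ 32 * (C * M) ^ 2 * K / (n : ℝ) := by
  have hC : 0 ≤ C := (norm_nonneg (g 1)).trans (hbound _ (hgD 1 le_rfl))
  have hT : (0:ℝ) ≤ (C * M) ^ 2 * K := mul_nonneg (sq_nonneg _) hK
  -- norm bound from membership in Σ_{n,M}
  have normSigma : ∀ (n : ℕ) (f : H), f ∈ SigmaNM D n M → ‖f‖ ≤ M * C := by
    rintro n f ⟨a, gs, hgs, hsum, rfl⟩
    calc ‖∑ i, a i • gs i‖ ≤ ∑ i, ‖a i • gs i‖ := norm_sum_le _ _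
      _ = ∑ i, |a i| * ‖gs i‖ := by simp [norm_smul]
      _ ≤ ∑ i, |a i| * C :=
          Finset.sum_le_sum fun i _ =>
            mul_le_mul_of_nonneg_left (hbound _ (hgs i)) (abs_nonneg _)
      _ = (∑ i, |a i|) * C := (Finset.sum_mul _ _ _).symm
      _ ≤ M * C := mul_le_mul_of_nonneg_right hsum hC
  -- gradient inequality from convexity
  have hgrad_ineq : ∀ x z : H, ⟪gradL x, z - x⟫_ℝ ≤ L z - L x := by
    intro x z
    set φ : ℝ → ℝ := fun t => L (x + t • (z - x)) with hφdef
    have hline : HasDerivAt (fun t : ℝ => x + t • (z - x)) (z - x) 0 := by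
      simpa using ((hasDerivAt_id (0 : ℝ)).smul_const (z - x)).const_add x
    have hF : HasFDerivAt L (InnerProductSpace.toDual ℝ H (gradL x))
        (x + (0:ℝ) • (z - x)) := by
      simpa using (hdiff x).hasFDerivAt
    have hφ' : HasDerivAt φ ⟪gradL x, z - x⟫_ℝ 0 := by
      have h := hF.comp_hasDerivAt 0 hline
      simpa [φ, Function.comp_def, InnerProductSpace.toDual_apply_apply] using h
    have hslope : Filter.Tendsto (slope φ 0) (nhdsWithin 0 (Set.Ioi 0))
        (nhds ⟪gradL x, z - x⟫_ℝ) :=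
      (hasDerivAt_iff_tendsto_slope.mp hφ').mono_left
        (nhdsWithin_mono 0 (fun t ht => by
          simp only [Set.mem_compl_iff, Set.mem_singleton_iff]
          exact ne_of_gt ht))
    refine le_of_tendsto hslope ?_
    filter_upwards [Ioo_mem_nhdsGT_of_mem (Set.mem_Ico.mpr ⟨le_rfl, zero_lt_one⟩)] with t ht
    have hconv' := hconv.2 (Set.mem_univ x) (Set.mem_univ z)
      (by linarith [ht.2] : (0:ℝ) ≤ 1 - t) (le_of_lt ht.1) (by ring)
    have heq : (1 - t) • x + t • z = x + t • (z - x) := by module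
    have hφt : φ t ≤ (1 - t) * L x + t * L z := by
      rw [hφdef]; simp only; rw [← heq]; simpa using hconv'
    have hφ0 : φ 0 = L x := by simp [hφdef]
    rw [slope_def_field, hφ0]
    rw [div_le_iff₀ (by linarith [ht.1] : (0:ℝ) < t - 0)]
    nlinarith [ht.1, hφt]
  -- the closure-of-convex-hull inner product bound
  have hhull : ∀ (p e : H), (∀ d ∈ D, ⟪d, p⟫_ℝ ≤ ⟪e, p⟫_ℝ) →
      ∀ w ∈ symmConvexHull D, -⟪e, p⟫_ℝ ≤ ⟪w, p⟫_ℝ := by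
    intro p e hmax w hw
    have hsub : D ∪ (-D) ⊆ {w : H | -⟪e, p⟫_ℝ ≤ ⟪w, p⟫_ℝ} := by
      rintro d (hd | hd)
      · have h1 := hmax (-d) (hsymm d hd)
        simp only [inner_neg_left] at h1
        simp only [Set.mem_setOf_eq]
        linarith
      · rw [Set.mem_neg] at hd
        have h2 : d ∈ D := by simpa using hsymm (-d) hd
        have h1 := hmax (-d) (hsymm d h2)
        simp only [inner_neg_left] at h1
        simp only [Set.mem_setOf_eq]
        linarith
    have hcvx : Convex ℝ {w : H | -⟪e, p⟫_ℝ ≤ ⟪w, p⟫_ℝ} :=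
      convex_halfSpace_ge
        ⟨fun a b => inner_add_left a b p, fun c a => real_inner_smul_left a p c⟩ _
    have hcl : IsClosed {w : H | -⟪e, p⟫_ℝ ≤ ⟪w, p⟫_ℝ} :=
      isClosed_le continuous_const (continuous_id.inner continuous_const)
    exact closure_minimal (convexHull_min hsub hcvx) hcl hw
  -- one-step estimate
  have hstep : ∀ n : ℕ, 1 ≤ n → ‖u (n - 1)‖ ≤ M * C →
      ∀ z ∈ M • symmConvexHull D,
        L (u n) - L z ≤ (1 - α n) * (L (u (n - 1)) - L z)
          + 2 * ((C * M) ^ 2 * K) * (α n) ^ 2 := by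
    intro n hn hnorm' z hz
    obtain ⟨w, hw, rfl⟩ := hz
    set u' := u (n - 1) with hu'
    set p := gradL u' with hp
    have hα0 : 0 ≤ α n := by
      rw [hα]; exact le_min zero_le_one (by positivity)
    have hdiffu : u n - u' = α n • (-(M • g n) - u') := by
      rw [hiter n hn]; module
    have hnormgn : ‖g n‖ ≤ C := hbound _ (hgD n hn)
    have hnormv : ‖-(M • g n) - u'‖ ≤ 2 * (M * C) := by
      calc ‖-(M • g n) - u'‖ ≤ ‖-(M • g n)‖ + ‖u'‖ := norm_sub_le _ _
        _ = M * ‖g n‖ + ‖u'‖ := by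
            rw [norm_neg, norm_smul, Real.norm_eq_abs, abs_of_pos hM]
        _ ≤ M * C + M * C :=
            add_le_add (mul_le_mul_of_nonneg_left hnormgn hM.le) hnorm'
        _ = 2 * (M * C) := by ring
    have hnormd : ‖u n - u'‖ ≤ α n * (2 * (M * C)) := by
      rw [hdiffu, norm_smul, Real.norm_eq_abs, abs_of_nonneg hα0]
      exact mul_le_mul_of_nonneg_left hnormv hα0
    have hin : ⟪p, -(M • g n)⟫_ℝ ≤ ⟪p, M • w⟫_ℝ := by
      have h1 := hhull p (g n) (hgmax n hn) w hw
      have e1 : ⟪p, -(M • g n)⟫_ℝ = M * (-⟪g n, p⟫_ℝ) := by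
        rw [inner_neg_right, real_inner_smul_right, real_inner_comm]; ring
      have e2 : ⟪p, M • w⟫_ℝ = M * ⟪w, p⟫_ℝ := by
        rw [real_inner_smul_right, real_inner_comm]
      rw [e1, e2]
      exact mul_le_mul_of_nonneg_left h1 hM.le
    have hgi := hgrad_ineq u' (M • w)
    have hinn2 : ⟪p, u n - u'⟫_ℝ ≤ α n * (L (M • w) - L u') := by
      rw [hdiffu, real_inner_smul_right]
      refine mul_le_mul_of_nonneg_left ?_ hα0
      calc ⟪p, -(M • g n) - u'⟫_ℝ = ⟪p, -(M • g n)⟫_ℝ - ⟪p, u'⟫_ℝ :=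
            inner_sub_right _ _ _
        _ ≤ ⟪p, M • w⟫_ℝ - ⟪p, u'⟫_ℝ := by linarith
        _ = ⟪p, M • w - u'⟫_ℝ := (inner_sub_right _ _ _).symm
        _ ≤ L (M • w) - L u' := hgi
    have hsm := hsmooth (u n) u'
    have hsq : ‖u n - u'‖ ^ 2 ≤ (α n * (2 * (M * C))) ^ 2 :=
      pow_le_pow_left₀ (norm_nonneg _) hnormd 2
    have hsq' : K / 2 * ‖u n - u'‖ ^ 2 ≤ K / 2 * (α n * (2 * (M * C))) ^ 2 :=
      mul_le_mul_of_nonneg_left hsq (by positivity)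
    nlinarith [hsm, hinn2, hsq']
  -- main induction
  intro n hn
  induction n, hn using Nat.le_induction with
  | base =>
    have h1 : α 1 = 1 := by rw [hα]; norm_num
    constructor
    · refine ⟨fun _ => -M, fun _ => g 1, fun _ => hgD 1 le_rfl, ?_, ?_⟩
      · simp [abs_of_pos hM]
      · rw [hiter 1 le_rfl, h1, hu0]
        simp [neg_smul]
    · intro z hz
      have hb := hstep 1 le_rfl (by
        simp only [Nat.sub_self, hu0, norm_zero]
        exact mul_nonneg hM.le hC) z hz
      rw [h1] at hb
      have : ((1:ℕ):ℝ) = 1 := by norm_num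
      rw [this, div_one]
      nlinarith [hb]
  | succ n hn ih =>
    obtain ⟨hmem, hbnd⟩ := ih
    have hnormun : ‖u n‖ ≤ M * C := normSigma n _ hmem
    have hN : (1:ℝ) ≤ (n:ℝ) := by exact_mod_cast hn
    have hn1 : (0:ℝ) < (n:ℝ) + 1 := by linarith
    have h2le : 2 / ((n:ℝ) + 1) ≤ 1 := by
      rw [div_le_one hn1]; linarith
    have hαeq : α (n + 1) = 2 / ((n:ℝ) + 1) := by
      rw [hα]; push_cast; exact min_eq_right h2le
    have hα0' : 0 ≤ α (n + 1) := by rw [hαeq]; positivity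
    have h1α : 0 ≤ 1 - α (n + 1) := by rw [hαeq]; linarith
    constructor
    · obtain ⟨a, gs, hgs, hsum, hrep⟩ := hmem
      refine ⟨Fin.snoc (fun i => (1 - α (n + 1)) * a i) (-(M * α (n + 1))),
        Fin.snoc gs (g (n + 1)), ?_, ?_, ?_⟩
      · intro i
        refine Fin.lastCases ?_ ?_ i
        · simp only [Fin.snoc_last]
          exact hgD (n + 1) (by omega)
        · intro j
          simp only [Fin.snoc_castSucc]
          exact hgs j
      · rw [Fin.sum_univ_castSucc]
        simp only [Fin.snoc_castSucc, Fin.snoc_last]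
        calc (∑ i : Fin n, |(1 - α (n + 1)) * a i|) + |-(M * α (n + 1))|
            = (1 - α (n + 1)) * (∑ i, |a i|) + M * α (n + 1) := by
              rw [abs_neg, abs_of_nonneg (mul_nonneg hM.le hα0'), Finset.mul_sum]
              congr 1
              exact Finset.sum_congr rfl fun i _ => by
                rw [abs_mul, abs_of_nonneg h1α]
          _ ≤ (1 - α (n + 1)) * M + M * α (n + 1) :=
              add_le_add (mul_le_mul_of_nonneg_left hsum h1α) le_rfl
          _ = M := by ring
      · rw [Fin.sum_univ_castSucc]
        simp only [Fin.snoc_castSucc, Fin.snoc_last]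
        have hit := hiter (n + 1) (by omega)
        simp only [Nat.add_sub_cancel] at hit
        rw [hit, hrep, Finset.smul_sum]
        simp only [smul_smul, neg_smul, sub_eq_add_neg]
    · intro z hz
      have hb := hstep (n + 1) (by omega) (by
        simpa only [Nat.add_sub_cancel] using hnormun) z hz
      simp only [Nat.add_sub_cancel] at hb
      have hbn := hbnd z hz
      set T := (C * M) ^ 2 * K with hTdef
      rw [hαeq] at hb
      have hn0 : (0:ℝ) < (n:ℝ) := by linarith
      have step1 : (1 - 2 / ((n:ℝ) + 1)) * (L (u n) - L z)
          ≤ (1 - 2 / ((n:ℝ) + 1)) * (32 * T / (n:ℝ)) := by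
        refine mul_le_mul_of_nonneg_left ?_ (by linarith [h2le])
        calc L (u n) - L z ≤ 32 * (C * M) ^ 2 * K / (n:ℝ) := hbn
          _ = 32 * T / (n:ℝ) := by rw [hTdef]; ring_nf
      have harith : (1 - 2 / ((n:ℝ) + 1)) * (32 * T / (n:ℝ))
          + 2 * T * (2 / ((n:ℝ) + 1)) ^ 2 ≤ 32 * T / ((n:ℝ) + 1) := by
        rw [← sub_nonpos]
        have key : (1 - 2 / ((n:ℝ) + 1)) * (32 * T / (n:ℝ))
            + 2 * T * (2 / ((n:ℝ) + 1)) ^ 2 - 32 * T / ((n:ℝ) + 1)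
            = -(T * (24 * (n:ℝ) + 32)) / ((n:ℝ) * ((n:ℝ) + 1) ^ 2) := by
          field_simp
          ring
        rw [key]
        apply div_nonpos_of_nonpos_of_nonneg
        · exact neg_nonpos.mpr (mul_nonneg hT (by linarith))
        · positivity
      have hfin : L (u (n + 1)) - L z ≤ 32 * T / ((n:ℝ) + 1) := by
        calc L (u (n + 1)) - L z
            ≤ (1 - 2 / ((n:ℝ) + 1)) * (L (u n) - L z)
              + 2 * T * (2 / ((n:ℝ) + 1)) ^ 2 := hb
          _ ≤ (1 - 2 / ((n:ℝ) + 1)) * (32 * T / (n:ℝ))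
              + 2 * T * (2 / ((n:ℝ) + 1)) ^ 2 := by linarith
          _ ≤ 32 * T / ((n:ℝ) + 1) := harith
      calc L (u (n + 1)) - L z ≤ 32 * T / ((n:ℝ) + 1) := hfin
        _ = 32 * (C * M) ^ 2 * K / (((n:ℕ) + 1 : ℕ) : ℝ) := by
            rw [hTdef]; push_cast; ring_nf
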